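/- Let B_1, …, B_n be mutually independent Bernoulli random variables and let v_1, …, v_n be nonzero real numbers. Then sup_{x∈ℝ} P(v_1 B_1 + ⋯ + v_n B_n = x) ≤ max_{a ∈ {−1,+1}^n} sup_{x∈ℝ} P(a_1 B_1 + ⋯ + a_n B_n = x). -/

import Mathlib

open MeasureTheory ProbabilityTheory Real Finset
open scoped symmDiff

namespace LORed
variable {ι : Type*} [DecidableEq ι]

noncomputable def W (p : ι → ℝ) (s T : Finset ι) : ℝ :=
  (∏ i ∈ T, p i) * ∏ i ∈ s \ T, (1 - p i)

noncomputable def Lv (p : ι → ℝ) (s : Finset ι) (k : ℕ) : ℝ :=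
  ∑ T ∈ s.powerset.filter (fun T => T.card = k), W p s T

lemma W_nonneg {p : ι → ℝ} {s : Finset ι} (hp : ∀ i ∈ s, 0 ≤ p i ∧ p i ≤ 1)
    {T : Finset ι} (hT : T ⊆ s) : 0 ≤ W p s T := by
  apply mul_nonneg
  · exact Finset.prod_nonneg fun i hi => (hp i (hT hi)).1
  · exact Finset.prod_nonneg fun i hi => by
      have := (hp i (Finset.mem_sdiff.mp hi).1).2; linarith

lemma W_pos {p : ι → ℝ} {s : Finset ι} (hp : ∀ i ∈ s, 0 < p i ∧ p i < 1)
    {T : Finset ι} (hT : T ⊆ s) : 0 < W p s T := by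
  apply mul_pos
  · exact Finset.prod_pos fun i hi => (hp i (hT hi)).1
  · exact Finset.prod_pos fun i hi => by
      have := (hp i (Finset.mem_sdiff.mp hi).1).2; linarith

lemma Lv_nonneg {p : ι → ℝ} {s : Finset ι} (hp : ∀ i ∈ s, 0 ≤ p i ∧ p i ≤ 1)
    (k : ℕ) : 0 ≤ Lv p s k := by
  apply Finset.sum_nonneg
  intro T hT
  simp only [Finset.mem_filter, Finset.mem_powerset] at hT
  exact W_nonneg hp hT.1

lemma Lv_pos {p : ι → ℝ} {s : Finset ι} (hp : ∀ i ∈ s, 0 < p i ∧ p i < 1)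
    {k : ℕ} (hk : k ≤ s.card) : 0 < Lv p s k := by
  obtain ⟨T, hTs, hTc⟩ := Finset.exists_subset_card_eq hk
  apply Finset.sum_pos'
  · intro R hR
    simp only [Finset.mem_filter, Finset.mem_powerset] at hR
    exact le_of_lt (W_pos hp hR.1)
  · exact ⟨T, by simp [Finset.mem_filter, Finset.mem_powerset, hTs, hTc],
      W_pos hp hTs⟩

lemma Lv_eq_zero {p : ι → ℝ} {s : Finset ι} {k : ℕ} (hk : s.card < k) :
    Lv p s k = 0 := by
  rw [Lv]
  apply Finset.sum_eq_zero
  intro T hT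
  simp only [Finset.mem_filter, Finset.mem_powerset] at hT
  exact absurd (hT.2 ▸ Finset.card_le_card hT.1) (by omega)

lemma W_insert_not_mem {p : ι → ℝ} {s T : Finset ι} {a : ι} (has : a ∉ s) (haT : a ∉ T) :
    W p (insert a s) T = (1 - p a) * W p s T := by
  rw [W, W, Finset.insert_sdiff_of_notMem _ haT,
    Finset.prod_insert (fun h => has (Finset.mem_sdiff.mp h).1)]
  ring

lemma W_insert_mem {p : ι → ℝ} {s T : Finset ι} {a : ι} (has : a ∉ s) (haT : a ∈ T) :
    W p (insert a s) T = p a * W p s (T.erase a) := by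
  have h1 : (insert a s) \ T = s \ (T.erase a) := by
    ext i
    simp only [Finset.mem_sdiff, Finset.mem_insert, Finset.mem_erase]
    constructor
    · rintro ⟨hi | hi, hiT⟩
      · exact absurd hi (by rintro rfl; exact hiT haT)
      · exact ⟨hi, fun h => hiT h.2⟩
    · rintro ⟨hi, hiT⟩
      exact ⟨Or.inr hi, fun h => hiT ⟨fun hr => has (hr ▸ hi), h⟩⟩
  rw [W, W, h1, ← Finset.mul_prod_erase T p haT]
  ring

lemma filter_not_mem_eq {s : Finset ι} {a : ι} (has : a ∉ s) (k : ℕ) :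
    ((insert a s).powerset.filter (fun T => T.card = k)).filter (fun T => a ∉ T)
      = s.powerset.filter (fun T => T.card = k) := by
  ext T
  simp only [Finset.mem_filter, Finset.mem_powerset]
  constructor
  · rintro ⟨⟨h1, h2⟩, h3⟩
    exact ⟨fun i hi => (Finset.mem_insert.mp (h1 hi)).resolve_left
      (by rintro rfl; exact h3 hi), h2⟩
  · rintro ⟨h1, h2⟩
    exact ⟨⟨h1.trans (Finset.subset_insert a s), h2⟩, fun h => has (h1 h)⟩

lemma Lv_insert_succ {p : ι → ℝ} {s : Finset ι} {a : ι} (has : a ∉ s) (k : ℕ) :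
    Lv p (insert a s) (k + 1) = (1 - p a) * Lv p s (k + 1) + p a * Lv p s k := by
  rw [Lv, ← Finset.sum_filter_add_sum_filter_not _ (fun T => a ∉ T)]
  congr 1
  · rw [filter_not_mem_eq has, Lv, Finset.mul_sum]
    apply Finset.sum_congr rfl
    intro T hT
    simp only [Finset.mem_filter, Finset.mem_powerset] at hT
    exact W_insert_not_mem has (fun h => has (hT.1 h))
  · -- sets containing a
    rw [Lv, Finset.mul_sum]
    have himg : (((insert a s).powerset.filter (fun T => T.card = k + 1)).filter
        (fun T => ¬ a ∉ T)).image (fun T => T.erase a)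
        = s.powerset.filter (fun T => T.card = k) := by
      ext R
      simp only [Finset.mem_image, Finset.mem_filter, Finset.mem_powerset, not_not]
      constructor
      · rintro ⟨T, ⟨⟨hTs, hTc⟩, haT⟩, rfl⟩
        constructor
        · intro i hi
          have := hTs (Finset.mem_erase.mp hi).2
          exact (Finset.mem_insert.mp this).resolve_left (Finset.mem_erase.mp hi).1
        · rw [Finset.card_erase_of_mem haT, hTc]; rfl
      · rintro ⟨hRs, hRc⟩
        refine ⟨insert a R, ⟨⟨Finset.insert_subset_insert a hRs, ?_⟩,
          Finset.mem_insert_self a R⟩, ?_⟩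
        · rw [Finset.card_insert_of_notMem (fun h => has (hRs h)), hRc]
        · exact Finset.erase_insert (fun h => has (hRs h))
    rw [← himg, Finset.sum_image ?inj]
    case inj =>
      intro T hT T' hT' hE
      simp only [Finset.mem_coe, Finset.mem_filter, not_not] at hT hT' hE
      rw [← Finset.insert_erase hT.2, hE, Finset.insert_erase hT'.2]
    apply Finset.sum_congr rfl
    intro T hT
    simp only [Finset.mem_filter, Finset.mem_powerset, not_not] at hT
    exact W_insert_mem has hT.2

lemma Lv_insert_zero {p : ι → ℝ} {s : Finset ι} {a : ι} (has : a ∉ s) :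
    Lv p (insert a s) 0 = (1 - p a) * Lv p s 0 := by
  have h : ∀ (t : Finset ι), t.powerset.filter (fun T => T.card = 0) = {∅} := by
    intro t
    ext T
    simp only [Finset.mem_filter, Finset.mem_powerset, Finset.card_eq_zero,
      Finset.mem_singleton]
    exact ⟨fun h => h.2, by rintro rfl; exact ⟨Finset.empty_subset t, rfl⟩⟩
  rw [Lv, Lv, h, h, Finset.sum_singleton, Finset.sum_singleton,
    W_insert_not_mem has (Finset.notMem_empty a)]


lemma Lv_logconcave {p : ι → ℝ} {s : Finset ι} (hp : ∀ i ∈ s, 0 < p i ∧ p i < 1) :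
    ∀ k : ℕ, Lv p s (k + 2) * Lv p s k ≤ Lv p s (k + 1) ^ 2 := by
  induction s using Finset.induction_on with
  | empty =>
    intro k
    rw [Lv_eq_zero (by simp), zero_mul]
    positivity
  | @insert a s has IH =>
    have hpa := hp a (Finset.mem_insert_self a s)
    have hp' : ∀ i ∈ s, 0 < p i ∧ p i < 1 :=
      fun i hi => hp i (Finset.mem_insert_of_mem hi)
    have hq : (0:ℝ) < 1 - p a := by linarith [hpa.2]
    have IH' := IH hp'
    have hnn : ∀ m, 0 ≤ Lv p s m :=
      fun m => Lv_nonneg (fun i hi => ⟨(hp' i hi).1.le, (hp' i hi).2.le⟩) m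
    -- helper: Lv s (j+3) * Lv s j ≤ Lv s (j+2) * Lv s (j+1)
    have hstep : ∀ j : ℕ, Lv p s (j + 3) * Lv p s j ≤ Lv p s (j + 2) * Lv p s (j + 1) := by
      intro j
      by_cases hj : j + 2 ≤ s.card
      · have h1 : 0 < Lv p s (j + 1) := Lv_pos hp' (by omega)
        have h2 : 0 < Lv p s (j + 2) := Lv_pos hp' hj
        have a1 := IH' j
        have a2 := IH' (j + 1)
        have key : (Lv p s (j+3) * Lv p s j) * (Lv p s (j+1) * Lv p s (j+2))
            ≤ (Lv p s (j+2) * Lv p s (j+1)) * (Lv p s (j+1) * Lv p s (j+2)) := by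
          have e1 : (Lv p s (j+3) * Lv p s j) * (Lv p s (j+1) * Lv p s (j+2))
              = (Lv p s (j+3) * Lv p s (j+1)) * (Lv p s (j+2) * Lv p s j) := by ring
          have e2 : (Lv p s (j+2) * Lv p s (j+1)) * (Lv p s (j+1) * Lv p s (j+2))
              = (Lv p s (j+2)^2) * (Lv p s (j+1)^2) := by ring
          rw [e1, e2]
          have t1 : Lv p s (j+1+2) * Lv p s (j+1) ≤ Lv p s (j+2)^2 := a2
          have t2 : Lv p s (j+2) * Lv p s j ≤ Lv p s (j+1)^2 := a1
          apply mul_le_mul t1 t2 (mul_nonneg (hnn _) (hnn _)) (by positivity)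
        exact le_of_mul_le_mul_right key (by positivity)
      · have h3 : Lv p s (j + 3) = 0 := Lv_eq_zero (by omega)
        rw [h3, zero_mul]
        exact mul_nonneg (hnn _) (hnn _)
    intro k
    match k with
    | 0 =>
      rw [Lv_insert_zero has, Lv_insert_succ has 0, Lv_insert_succ has 1]
      simp only [show (1:ℕ)+1 = 2 by omega, show (0:ℕ)+1 = 1 by omega]
      have i0 : Lv p s 2 * Lv p s 0 ≤ Lv p s 1 ^ 2 := by
        have := IH' 0; norm_num at this; exact this
      nlinarith [mul_le_mul_of_nonneg_left i0 (mul_nonneg hq.le hq.le),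
        mul_nonneg (mul_nonneg hpa.1.le hq.le) (mul_nonneg (hnn 1) (hnn 0)),
        mul_nonneg (mul_nonneg hpa.1.le hpa.1.le) (mul_nonneg (hnn 0) (hnn 0))]
    | (j+1) =>
      rw [Lv_insert_succ has j, Lv_insert_succ has (j+1), Lv_insert_succ has (j+2)]
      simp only [show j+2+1 = j+3 by omega, show j+1+1 = j+2 by omega]
      have i1 : Lv p s (j+2) * Lv p s j ≤ Lv p s (j+1) ^ 2 := IH' j
      have i2 : Lv p s (j+3) * Lv p s (j+1) ≤ Lv p s (j+2) ^ 2 := by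
        have := IH' (j+1); simp only [show j+1+2 = j+3 by omega, show j+1+1 = j+2 by omega] at this
        exact this
      nlinarith [mul_le_mul_of_nonneg_left i1 (mul_nonneg hq.le hq.le),
        mul_le_mul_of_nonneg_left i2 (mul_nonneg hpa.1.le hpa.1.le),
        mul_le_mul_of_nonneg_left (hstep j) (mul_nonneg hpa.1.le hq.le),
        mul_nonneg (mul_nonneg hpa.1.le hq.le) (mul_nonneg (hnn (j+1)) (hnn (j+1)))]

/-- Key algebraic inequality for the normalized-matching induction step. -/
lemma key_ineq {q p A0 A1 B0 B1 C M0 M1 M2 : ℝ}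
    (hq : 0 ≤ q) (hp : 0 ≤ p)
    (hA0 : 0 ≤ A0) (hA1 : 0 ≤ A1) (hB1 : 0 ≤ B1)
    (hM0 : 0 ≤ M0) (hM1 : 0 ≤ M1) (hM2 : 0 ≤ M2)
    (hCB0 : B0 ≤ C) (hCA1 : A1 ≤ C)
    (hup0 : A0 * M1 ≤ B0 * M0) (hup1 : A1 * M2 ≤ B1 * M1)
    (hlc : M0 * M2 ≤ M1 * M1) (hz : M0 = 0 → A0 = 0) :
    (q * A0 + p * A1) * (q * M1 + p * M2) ≤ (q * C + p * B1) * (q * M0 + p * M1) := by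
  have h1 : A0 * M1 ≤ C * M0 := by
    rcases eq_or_lt_of_le hM0 with h | h
    · rw [hz h.symm]; rw [← h]; simp
    · calc A0 * M1 ≤ B0 * M0 := hup0
        _ ≤ C * M0 := by nlinarith
  have h2 : A1 * M2 ≤ B1 * M1 := hup1
  have h3 : A0 * M2 + A1 * M1 ≤ C * M1 + B1 * M0 := by
    rcases eq_or_lt_of_le hM0 with hM0e | hM0pos
    · -- M0 = 0 : A0 = 0, need A1 * M1 ≤ C * M1
      have hA0z : A0 = 0 := hz hM0e.symm
      rw [hA0z]
      nlinarith
    rcases eq_or_lt_of_le hM1 with hM1e | hM1pos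
    · -- M1 = 0 : then M0 * M2 ≤ 0 so M2 = 0
      have hM2z : M2 = 0 := by nlinarith
      rw [← hM1e, hM2z]
      nlinarith
    -- main case M0 > 0, M1 > 0
    rcases le_or_gt (A1 * M0) (A0 * M1) with hcmp | hcmp
    · -- use C ≥ B0 : show B0*M1 + B1*M0 ≥ A0*M2 + A1*M1
      have hX : A0 * M2 + A1 * M1 ≤ B0 * M1 + B1 * M0 := by
        have expand : (B0 * M1 + B1 * M0 - A0 * M2 - A1 * M1) * (M1 * M0)
            = (B0 * M0) * (M1 * M1) + (B1 * M1) * (M0 * M0)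
              - A0 * M2 * M1 * M0 - A1 * M1 * M1 * M0 := by ring
        have e1 : A0 * M1 * (M1 * M1) ≤ (B0 * M0) * (M1 * M1) :=
          mul_le_mul_of_nonneg_right hup0 (by positivity)
        have e2 : A1 * M2 * (M0 * M0) ≤ (B1 * M1) * (M0 * M0) :=
          mul_le_mul_of_nonneg_right hup1 (by positivity)
        have final : 0 ≤ (B0 * M1 + B1 * M0 - A0 * M2 - A1 * M1) * (M1 * M0) := by
          rw [expand]
          nlinarith [mul_le_mul_of_nonneg_left hlc hA0, mul_le_mul_of_nonneg_left hlc hA1,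
            mul_le_mul_of_nonneg_right hcmp (sub_nonneg.mpr hlc)]
        nlinarith [mul_pos hM1pos hM0pos]
      nlinarith
    · -- use C ≥ A1 : show B1*M0 ≥ A0*M2
      have hX : A0 * M2 ≤ B1 * M0 := by
        have c1 : A0 * M2 * (M0 * M1) ≤ B1 * M0 * (M0 * M1) := by
          have t1 : A0 * M1 * (M0 * M2) ≤ A1 * M0 * (M0 * M2) :=
            mul_le_mul_of_nonneg_right hcmp.le (by positivity)
          have t2 : A1 * M2 * (M0 * M0) ≤ B1 * M1 * (M0 * M0) :=
            mul_le_mul_of_nonneg_right hup1 (by positivity)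
          nlinarith
        exact le_of_mul_le_mul_right c1 (by positivity)
      nlinarith
  nlinarith [mul_le_mul_of_nonneg_left h1 (mul_nonneg hq hq),
    mul_le_mul_of_nonneg_left h2 (mul_nonneg hp hp),
    mul_le_mul_of_nonneg_left h3 (mul_nonneg hq hp)]

/-- Normalized matching (downward local LYM) for the weighted cube. -/
lemma nmp {p : ι → ℝ} {s : Finset ι} (hp : ∀ i ∈ s, 0 < p i ∧ p i < 1) :
    ∀ (k : ℕ) (U : Finset (Finset ι)), (∀ T ∈ U, T ⊆ s ∧ T.card = k + 1) →
      (∑ T ∈ U, W p s T) * Lv p s k ≤ (∑ R ∈ U.shadow, W p s R) * Lv p s (k + 1) := by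
  induction s using Finset.induction_on with
  | empty =>
    intro k U hU
    have : U = ∅ := by
      by_contra h
      obtain ⟨T, hT⟩ := Finset.nonempty_iff_ne_empty.mpr h
      obtain ⟨h1, h2⟩ := hU T hT
      obtain rfl := Finset.subset_empty.mp h1
      simp at h2
    subst this
    simp
  | @insert a s has IH =>
    intro k U hU
    have hpa := hp a (Finset.mem_insert_self a s)
    have hp' : ∀ i ∈ s, 0 < p i ∧ p i < 1 := fun i hi => hp i (Finset.mem_insert_of_mem hi)
    have hp0' : ∀ i ∈ s, 0 ≤ p i ∧ p i ≤ 1 := fun i hi => ⟨(hp' i hi).1.le, (hp' i hi).2.le⟩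
    have hq : (0:ℝ) < 1 - p a := by linarith [hpa.2]
    set U0 : Finset (Finset ι) := U.filter (fun T => a ∉ T) with hU0def
    set U1 : Finset (Finset ι) := (U.filter (fun T => a ∈ T)).image (fun T => T.erase a) with hU1def
    -- basic membership facts
    have hU0mem : ∀ T ∈ U0, T ⊆ s ∧ T.card = k + 1 := by
      intro T hT
      rw [hU0def, Finset.mem_filter] at hT
      obtain ⟨h1, h2⟩ := hU T hT.1
      exact ⟨fun i hi => (Finset.mem_insert.mp (h1 hi)).resolve_left
        (by rintro rfl; exact hT.2 hi), h2⟩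
    have hU1mem : ∀ R ∈ U1, R ⊆ s ∧ R.card = k := by
      intro R hR
      rw [hU1def, Finset.mem_image] at hR
      obtain ⟨T, hT, rfl⟩ := hR
      rw [Finset.mem_filter] at hT
      obtain ⟨h1, h2⟩ := hU T hT.1
      constructor
      · intro i hi
        rw [Finset.mem_erase] at hi
        exact (Finset.mem_insert.mp (h1 hi.2)).resolve_left hi.1
      · rw [Finset.card_erase_of_mem hT.2, h2]; rfl
    have hpI : ∀ i ∈ insert a s, 0 ≤ p i ∧ p i ≤ 1 :=
      fun i hi => ⟨(hp i hi).1.le, (hp i hi).2.le⟩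
    have hWnn : ∀ T, T ⊆ s → 0 ≤ W p s T := fun T hT => W_nonneg hp0' hT
    set A0 : ℝ := ∑ T ∈ U0, W p s T with hA0def
    set A1 : ℝ := ∑ R ∈ U1, W p s R with hA1def
    set B0 : ℝ := ∑ R ∈ U0.shadow, W p s R with hB0def
    set B1 : ℝ := ∑ R ∈ U1.shadow, W p s R with hB1def
    set C : ℝ := ∑ R ∈ U0.shadow ∪ U1, W p s R with hCdef
    have hsh0mem : ∀ R ∈ U0.shadow, R ⊆ s := by
      intro R hR
      obtain ⟨T, hT, i, hi, rfl⟩ := Finset.mem_shadow_iff.mp hR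
      exact (Finset.erase_subset i T).trans (hU0mem T hT).1
    have hsh1mem : ∀ R ∈ U1.shadow, R ⊆ s := by
      intro R hR
      obtain ⟨T, hT, i, hi, rfl⟩ := Finset.mem_shadow_iff.mp hR
      exact (Finset.erase_subset i T).trans (hU1mem T hT).1
    have hCUmem : ∀ R ∈ U0.shadow ∪ U1, R ⊆ s := by
      intro R hR
      rcases Finset.mem_union.mp hR with h | h
      · exact hsh0mem R h
      · exact (hU1mem R h).1
    -- injectivity of erase a on sets containing a
    have herase_inj : ∀ T ∈ U.filter (fun T => a ∈ T), ∀ T' ∈ U.filter (fun T => a ∈ T),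
        T.erase a = T'.erase a → T = T' := by
      intro T hT T' hT' hE
      rw [Finset.mem_filter] at hT hT'
      rw [← Finset.insert_erase hT.2, hE, Finset.insert_erase hT'.2]
    -- sum decomposition over U
    have hsumU : ∑ T ∈ U, W p (insert a s) T = (1 - p a) * A0 + p a * A1 := by
      rw [← Finset.sum_filter_add_sum_filter_not U (fun T => a ∉ T)]
      congr 1
      · rw [hA0def, Finset.mul_sum]
        apply Finset.sum_congr rfl
        intro T hT
        rw [Finset.mem_filter] at hT
        exact W_insert_not_mem has hT.2
      · rw [hA1def, hU1def, Finset.sum_image ?_, Finset.mul_sum]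
        · have : U.filter (fun T => ¬ a ∉ T) = U.filter (fun T => a ∈ T) := by
            simp [not_not]
          rw [this]
          apply Finset.sum_congr rfl
          intro T hT
          rw [Finset.mem_filter] at hT
          exact W_insert_mem has hT.2
        · exact herase_inj
    -- shadow decomposition
    have hS1notmem : ∀ R ∈ U1.shadow, a ∉ R := fun R hR h => has (hsh1mem R hR h)
    have hsub : (U0.shadow ∪ U1) ∪ (U1.shadow.image (insert a)) ⊆ U.shadow := by
      intro R hR
      rcases Finset.mem_union.mp hR with h | h
      · rcases Finset.mem_union.mp h with h' | h'
        · obtain ⟨T, hT, i, hi, rfl⟩ := Finset.mem_shadow_iff.mp h'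
          rw [hU0def, Finset.mem_filter] at hT
          exact Finset.mem_shadow_iff.mpr ⟨T, hT.1, i, hi, rfl⟩
        · obtain ⟨T, hT, rfl⟩ := Finset.mem_image.mp (hU1def ▸ h')
          rw [Finset.mem_filter] at hT
          exact Finset.mem_shadow_iff.mpr ⟨T, hT.1, a, hT.2, rfl⟩
      · obtain ⟨R1, hR1, rfl⟩ := Finset.mem_image.mp h
        obtain ⟨R2, hR2, i, hi, rfl⟩ := Finset.mem_shadow_iff.mp hR1
        obtain ⟨T, hT, rfl⟩ := Finset.mem_image.mp (hU1def ▸ hR2)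
        rw [Finset.mem_filter] at hT
        have hia : i ≠ a := (Finset.mem_erase.mp hi).1
        have hiT : i ∈ T := (Finset.mem_erase.mp hi).2
        have hkey : insert a ((T.erase a).erase i) = T.erase i := by
          ext j
          simp only [Finset.mem_insert, Finset.mem_erase]
          constructor
          · rintro (rfl | ⟨hji, hja, hjT⟩)
            · exact ⟨(Ne.symm hia), hT.2⟩
            · exact ⟨hji, hjT⟩
          · rintro ⟨hji, hjT⟩
            by_cases hja : j = a
            · exact Or.inl hja
            · exact Or.inr ⟨hji, hja, hjT⟩
        rw [hkey]
        exact Finset.mem_shadow_iff.mpr ⟨T, hT.1, i, hiT, rfl⟩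
    have hdisj : Disjoint (U0.shadow ∪ U1) (U1.shadow.image (insert a)) := by
      rw [Finset.disjoint_left]
      intro R hR hR'
      obtain ⟨R1, hR1, rfl⟩ := Finset.mem_image.mp hR'
      exact has (hCUmem _ hR (Finset.mem_insert_self a R1))
    have hWnnI : ∀ R ∈ U.shadow, 0 ≤ W p (insert a s) R := by
      intro R hR
      obtain ⟨T, hT, i, hi, rfl⟩ := Finset.mem_shadow_iff.mp hR
      exact W_nonneg hpI ((Finset.erase_subset i T).trans (hU T hT).1)
    have hshadow_ge : (1 - p a) * C + p a * B1 ≤ ∑ R ∈ U.shadow, W p (insert a s) R := by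
      have step1 : ∑ R ∈ (U0.shadow ∪ U1) ∪ (U1.shadow.image (insert a)),
          W p (insert a s) R ≤ ∑ R ∈ U.shadow, W p (insert a s) R :=
        Finset.sum_le_sum_of_subset_of_nonneg hsub (fun R hR _ => hWnnI R hR)
      have step2 : ∑ R ∈ (U0.shadow ∪ U1) ∪ (U1.shadow.image (insert a)),
          W p (insert a s) R = (1 - p a) * C + p a * B1 := by
        rw [Finset.sum_union hdisj]
        congr 1
        · rw [hCdef, Finset.mul_sum]
          apply Finset.sum_congr rfl
          intro R hR
          exact W_insert_not_mem has (fun h => has (hCUmem R hR h))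
        · rw [Finset.sum_image ?_]
          · rw [hB1def, Finset.mul_sum]
            apply Finset.sum_congr rfl
            intro R hR
            rw [W_insert_mem has (Finset.mem_insert_self a R),
              Finset.erase_insert (hS1notmem R hR)]
          · intro R hR R' hR' hE
            have h1 := hS1notmem R hR
            have h2 := hS1notmem R' hR'
            rw [← Finset.erase_insert h1, hE, Finset.erase_insert h2]
      linarith
    -- nonnegativity of the sums
    have hA0nn : 0 ≤ A0 := Finset.sum_nonneg fun T hT => hWnn T (hU0mem T hT).1
    have hA1nn : 0 ≤ A1 := Finset.sum_nonneg fun R hR => hWnn R (hU1mem R hR).1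
    have hB1nn : 0 ≤ B1 := Finset.sum_nonneg fun R hR => hWnn R (hsh1mem R hR)
    have hCB0 : B0 ≤ C :=
      Finset.sum_le_sum_of_subset_of_nonneg Finset.subset_union_left
        (fun R hR _ => hWnn R (hCUmem R hR))
    have hCA1 : A1 ≤ C :=
      Finset.sum_le_sum_of_subset_of_nonneg Finset.subset_union_right
        (fun R hR _ => hWnn R (hCUmem R hR))
    have hLnn : ∀ m, 0 ≤ Lv p s m := Lv_nonneg hp0'
    -- upward matching for U0 from IH
    have hup0 : A0 * Lv p s k ≤ B0 * Lv p s (k + 1) := IH hp' k U0 hU0mem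
    have hz : Lv p s (k + 1) = 0 → A0 = 0 := by
      intro h
      have hcard : s.card < k + 1 := by
        by_contra hc
        exact absurd h (ne_of_gt (Lv_pos hp' (not_lt.mp hc)))
      have : U0 = ∅ := by
        rw [Finset.eq_empty_iff_forall_notMem]
        intro T hT
        have := hU0mem T hT
        have := Finset.card_le_card this.1
        omega
      rw [hA0def, this, Finset.sum_empty]
    -- case split on k for levels
    rcases k with _ | j
    · -- k = 0
      have hL0 : Lv p (insert a s) 0 = (1 - p a) * Lv p s 0 := Lv_insert_zero has
      have hL1 : Lv p (insert a s) 1 = (1 - p a) * Lv p s 1 + p a * Lv p s 0 := by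
        have := Lv_insert_succ (p := p) has 0
        norm_num at this
        exact this
      have hkey := key_ineq (q := 1 - p a) (p := p a) (A0 := A0) (A1 := A1) (B0 := B0)
        (B1 := B1) (C := C) (M0 := Lv p s 1) (M1 := Lv p s 0) (M2 := 0)
        hq.le hpa.1.le hA0nn hA1nn hB1nn (hLnn 1) (hLnn 0) le_rfl hCB0 hCA1
        (by simpa using hup0) (by simpa using mul_nonneg hB1nn (hLnn 0))
        (by simpa using mul_nonneg (hLnn 0) (hLnn 0)) hz
      calc (∑ T ∈ U, W p (insert a s) T) * Lv p (insert a s) 0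
          = ((1 - p a) * A0 + p a * A1) * ((1 - p a) * Lv p s 0 + p a * 0) := by
            rw [hsumU, hL0]; ring
        _ ≤ ((1 - p a) * C + p a * B1) * ((1 - p a) * Lv p s 1 + p a * Lv p s 0) := hkey
        _ ≤ (∑ R ∈ U.shadow, W p (insert a s) R) * ((1 - p a) * Lv p s 1 + p a * Lv p s 0) := by
            apply mul_le_mul_of_nonneg_right hshadow_ge
            have := Lv_nonneg hpI (s := insert a s) 1
            rw [hL1] at this
            exact this
        _ = (∑ R ∈ U.shadow, W p (insert a s) R) * Lv p (insert a s) (0 + 1) := by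
            rw [show (0:ℕ)+1 = 1 by rfl, hL1]
    · -- k = j + 1
      have hLk : Lv p (insert a s) (j + 1) = (1 - p a) * Lv p s (j + 1) + p a * Lv p s j :=
        Lv_insert_succ has j
      have hLk1 : Lv p (insert a s) (j + 2) = (1 - p a) * Lv p s (j + 2) + p a * Lv p s (j + 1) := by
        have := Lv_insert_succ (p := p) has (j + 1)
        simpa [show j+1+1 = j+2 by omega] using this
      have hup1 : A1 * Lv p s j ≤ B1 * Lv p s (j + 1) := IH hp' j U1 hU1mem
      have hlc : Lv p s (j + 2) * Lv p s j ≤ Lv p s (j + 1) * Lv p s (j + 1) := by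
        have := Lv_logconcave hp' j
        nlinarith [this]
      have hkey := key_ineq (q := 1 - p a) (p := p a) (A0 := A0) (A1 := A1) (B0 := B0)
        (B1 := B1) (C := C) (M0 := Lv p s (j + 2)) (M1 := Lv p s (j + 1)) (M2 := Lv p s j)
        hq.le hpa.1.le hA0nn hA1nn hB1nn (hLnn (j+2)) (hLnn (j+1)) (hLnn j) hCB0 hCA1
        (by simpa [show j+1+1 = j+2 by omega] using hup0) hup1 hlc
        (by simpa [show j+1+1 = j+2 by omega] using hz)
      calc (∑ T ∈ U, W p (insert a s) T) * Lv p (insert a s) (j + 1)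
          = ((1 - p a) * A0 + p a * A1) * ((1 - p a) * Lv p s (j + 1) + p a * Lv p s j) := by
            rw [hsumU, hLk]
        _ ≤ ((1 - p a) * C + p a * B1) * ((1 - p a) * Lv p s (j + 2) + p a * Lv p s (j + 1)) := hkey
        _ ≤ (∑ R ∈ U.shadow, W p (insert a s) R)
              * ((1 - p a) * Lv p s (j + 2) + p a * Lv p s (j + 1)) := by
            apply mul_le_mul_of_nonneg_right hshadow_ge
            have := Lv_nonneg hpI (s := insert a s) (j + 2)
            rw [hLk1] at this
            exact this
        _ = (∑ R ∈ U.shadow, W p (insert a s) R) * Lv p (insert a s) (j + 1 + 1) := by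
            rw [show j+1+1 = j+2 by omega, hLk1]


lemma Lv_def (p : ι → ℝ) (s : Finset ι) (k : ℕ) :
    Lv p s k = ∑ T ∈ s.powerset.filter (fun T => T.card = k), W p s T := rfl

lemma div_le_div_of_nonneg_right' {a b c : ℝ} (h : a ≤ b) (hc : 0 < c) :
    a / c ≤ b / c := by
  gcongr

/-- Weighted Sperner: antichain weight is at most the maximum level weight,
for strictly interior `p`. -/
lemma antichain_le_sup {p : ι → ℝ} {s : Finset ι} (hp : ∀ i ∈ s, 0 < p i ∧ p i < 1)
    {A : Finset (Finset ι)} (hA : ∀ T ∈ A, T ⊆ s)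
    (anti : ∀ T ∈ A, ∀ T' ∈ A, T ⊆ T' → T = T') :
    ∑ T ∈ A, W p s T ≤ (Finset.range (s.card + 1)).sup' (by simp) (fun k => Lv p s k) := by
  classical
  have hp0 : ∀ i ∈ s, 0 ≤ p i ∧ p i ≤ 1 := fun i hi => ⟨(hp i hi).1.le, (hp i hi).2.le⟩
  have hWnn : ∀ T, T ⊆ s → 0 ≤ W p s T := fun T hT => W_nonneg hp0 hT
  set M : ℝ := (Finset.range (s.card + 1)).sup' (by simp) (fun k => Lv p s k) with hMdef
  set Uk : ℕ → Finset (Finset ι) :=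
    fun k => s.powerset.filter (fun T => T.card = k ∧ ∃ a ∈ A, T ⊆ a) with hUkdef
  have hUkmem : ∀ k, ∀ T ∈ Uk k, T ⊆ s ∧ T.card = k := by
    intro k T hT
    rw [hUkdef, Finset.mem_filter, Finset.mem_powerset] at hT
    exact ⟨hT.1, hT.2.1⟩
  have hUknn : ∀ k, 0 ≤ ∑ T ∈ Uk k, W p s T :=
    fun k => Finset.sum_nonneg fun T hT => hWnn T (hUkmem k T hT).1
  have hAk_sub : ∀ k, A.filter (fun T => T.card = k) ⊆ Uk k := by
    intro k T hT
    rw [Finset.mem_filter] at hT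
    rw [hUkdef, Finset.mem_filter, Finset.mem_powerset]
    exact ⟨hA T hT.1, hT.2, T, hT.1, Finset.Subset.refl T⟩
  have hshadow_sub : ∀ k, (Uk (k+1)).shadow ⊆ Uk k := by
    intro k R hR
    obtain ⟨T, hT, i, hi, rfl⟩ := Finset.mem_shadow_iff.mp hR
    rw [hUkdef, Finset.mem_filter, Finset.mem_powerset] at hT ⊢
    obtain ⟨hTs, hTc, a, haA, hTa⟩ := hT
    exact ⟨(Finset.erase_subset i T).trans hTs,
      by rw [Finset.card_erase_of_mem hi, hTc]; rfl,
      a, haA, (Finset.erase_subset i T).trans hTa⟩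
  have hdisj : ∀ k, Disjoint (A.filter (fun T => T.card = k)) ((Uk (k+1)).shadow) := by
    intro k
    rw [Finset.disjoint_left]
    intro T hTA hTsh
    rw [Finset.mem_filter] at hTA
    obtain ⟨T', hT', i, hi, rfl⟩ := Finset.mem_shadow_iff.mp hTsh
    rw [hUkdef, Finset.mem_filter, Finset.mem_powerset] at hT'
    obtain ⟨hT's, hT'c, a, haA, hT'a⟩ := hT'
    have hsub : T'.erase i ⊆ a := (Finset.erase_subset i T').trans hT'a
    have heq := anti _ hTA.1 a haA hsub
    have hc1 : (T'.erase i).card = k := by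
      rw [Finset.card_erase_of_mem hi, hT'c]; rfl
    have hc2 : k + 1 ≤ a.card := hT'c ▸ Finset.card_le_card hT'a
    rw [← heq] at hc2
    omega
  -- the descending induction
  have main : ∀ d k, k + d = s.card + 1 →
      ∑ j ∈ Finset.Ico k (s.card + 1),
        (∑ T ∈ A.filter (fun T => T.card = j), W p s T) / Lv p s j
      ≤ (∑ T ∈ Uk k, W p s T) / Lv p s k := by
    intro d
    induction d with
    | zero =>
      intro k hk
      have h1 : Finset.Ico k (s.card + 1) = ∅ := by
        rw [Finset.Ico_eq_empty_iff]; omega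
      have h2 : Uk k = ∅ := by
        rw [Finset.eq_empty_iff_forall_notMem]
        intro T hT
        have := hUkmem k T hT
        have := Finset.card_le_card this.1
        omega
      rw [h1, h2]
      simp
    | succ d IHd =>
      intro k hk
      have hkcard : k ≤ s.card := by omega
      have hLk : 0 < Lv p s k := Lv_pos hp hkcard
      have htail := IHd (k+1) (by omega)
      rw [Finset.sum_eq_sum_Ico_succ_bot (by omega :  k < s.card + 1)]
      -- goal : f k + tail-sum ≤ h k
      have hUsum : (∑ T ∈ A.filter (fun T => T.card = k), W p s T)
          + (∑ T ∈ Uk (k+1), W p s T) / Lv p s (k+1) * Lv p s k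
          ≤ ∑ T ∈ Uk k, W p s T := by
        rcases le_or_gt (Lv p s (k+1)) 0 with hL | hL
        · have hLz : Lv p s (k+1) = 0 :=
            le_antisymm hL (Lv_nonneg hp0 (k+1))
          rw [hLz, div_zero, zero_mul, add_zero]
          exact Finset.sum_le_sum_of_subset_of_nonneg (hAk_sub k)
            (fun T hT _ => hWnn T (hUkmem k T hT).1)
        · have hnmp := nmp hp k (Uk (k+1)) (hUkmem (k+1))
          have hsh : (∑ T ∈ Uk (k+1), W p s T) / Lv p s (k+1) * Lv p s k
              ≤ ∑ R ∈ (Uk (k+1)).shadow, W p s R := by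
            rw [div_mul_eq_mul_div, div_le_iff₀ hL]
            exact hnmp
          calc (∑ T ∈ A.filter (fun T => T.card = k), W p s T)
              + (∑ T ∈ Uk (k+1), W p s T) / Lv p s (k+1) * Lv p s k
              ≤ (∑ T ∈ A.filter (fun T => T.card = k), W p s T)
                + ∑ R ∈ (Uk (k+1)).shadow, W p s R := by linarith
            _ = ∑ T ∈ (A.filter (fun T => T.card = k)) ∪ (Uk (k+1)).shadow, W p s T :=
                (Finset.sum_union (hdisj k)).symm
            _ ≤ ∑ T ∈ Uk k, W p s T := by
                apply Finset.sum_le_sum_of_subset_of_nonneg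
                · exact Finset.union_subset (hAk_sub k) (hshadow_sub k)
                · exact fun T hT _ => hWnn T (hUkmem k T hT).1
      calc (∑ T ∈ A.filter (fun T => T.card = k), W p s T) / Lv p s k
            + ∑ j ∈ Finset.Ico (k+1) (s.card + 1),
                (∑ T ∈ A.filter (fun T => T.card = j), W p s T) / Lv p s j
          ≤ (∑ T ∈ A.filter (fun T => T.card = k), W p s T) / Lv p s k
            + (∑ T ∈ Uk (k+1), W p s T) / Lv p s (k+1) := by linarith
        _ = ((∑ T ∈ A.filter (fun T => T.card = k), W p s T)
            + (∑ T ∈ Uk (k+1), W p s T) / Lv p s (k+1) * Lv p s k) / Lv p s k := by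
            field_simp
        _ ≤ (∑ T ∈ Uk k, W p s T) / Lv p s k :=
            div_le_div_of_nonneg_right' hUsum hLk
  -- conclude
  have hmain := main (s.card + 1) 0 (by omega)
  have hU0 : (∑ T ∈ Uk 0, W p s T) / Lv p s 0 ≤ 1 := by
    rw [div_le_one (Lv_pos hp (Nat.zero_le _))]
    rw [Lv_def]
    apply Finset.sum_le_sum_of_subset_of_nonneg
    · intro T hT
      rw [hUkdef, Finset.mem_filter] at hT
      rw [Finset.mem_filter]
      exact ⟨hT.1, hT.2.1⟩
    · intro T hT _
      rw [Finset.mem_filter, Finset.mem_powerset] at hT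
      exact hWnn T hT.1
  have hLYM : ∑ j ∈ Finset.range (s.card + 1),
      (∑ T ∈ A.filter (fun T => T.card = j), W p s T) / Lv p s j ≤ 1 := by
    rw [Finset.range_eq_Ico]
    calc _ ≤ (∑ T ∈ Uk 0, W p s T) / Lv p s 0 := hmain
      _ ≤ 1 := hU0
  have hfib : ∑ T ∈ A, W p s T = ∑ j ∈ Finset.range (s.card + 1),
      ∑ T ∈ A.filter (fun T => T.card = j), W p s T := by
    rw [Finset.sum_fiberwise_of_maps_to ?_ (fun T => W p s T)]
    intro T hT
    rw [Finset.mem_range]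
    have := Finset.card_le_card (hA T hT)
    omega
  rw [hfib]
  have hMnn : 0 ≤ M := le_trans (Lv_pos hp (Nat.zero_le _)).le
    (Finset.le_sup' _ (by simp : 0 ∈ Finset.range (s.card + 1)))
  calc ∑ j ∈ Finset.range (s.card + 1), ∑ T ∈ A.filter (fun T => T.card = j), W p s T
      = ∑ j ∈ Finset.range (s.card + 1),
        Lv p s j * ((∑ T ∈ A.filter (fun T => T.card = j), W p s T) / Lv p s j) := by
        apply Finset.sum_congr rfl
        intro j hj
        rw [Finset.mem_range] at hj
        rw [mul_div_cancel₀ _ (ne_of_gt (Lv_pos hp (by omega)))]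
    _ ≤ ∑ j ∈ Finset.range (s.card + 1),
        M * ((∑ T ∈ A.filter (fun T => T.card = j), W p s T) / Lv p s j) := by
        apply Finset.sum_le_sum
        intro j hj
        apply mul_le_mul_of_nonneg_right (Finset.le_sup' _ hj)
        apply div_nonneg ?_ (Lv_nonneg hp0 j)
        exact Finset.sum_nonneg fun T hT =>
          hWnn T (hA T (Finset.mem_filter.mp hT).1)
    _ = M * ∑ j ∈ Finset.range (s.card + 1),
        (∑ T ∈ A.filter (fun T => T.card = j), W p s T) / Lv p s j := by
        rw [Finset.mul_sum]
    _ ≤ M * 1 := by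
        apply mul_le_mul_of_nonneg_left hLYM hMnn
    _ = M := mul_one M

/-- Weighted Sperner for all `p ∈ [0,1]`. -/
lemma antichain_le_sup' (p : ι → ℝ) : ∀ (s : Finset ι),
    (∀ i ∈ s, 0 ≤ p i ∧ p i ≤ 1) → ∀ (A : Finset (Finset ι)), (∀ T ∈ A, T ⊆ s) →
    (∀ T ∈ A, ∀ T' ∈ A, T ⊆ T' → T = T') →
    ∑ T ∈ A, W p s T ≤ (Finset.range (s.card + 1)).sup' (by simp) (fun k => Lv p s k) := by
  intro s
  induction s using Finset.strongInduction with
  | _ s IH =>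
    intro hp A hA anti
    by_cases hall : ∀ i ∈ s, 0 < p i ∧ p i < 1
    · exact antichain_le_sup hall hA anti
    · have hbad : ∃ a ∈ s, p a = 0 ∨ p a = 1 := by
        by_contra hno
        push_neg at hno
        apply hall
        intro i hi
        obtain ⟨h0, h1⟩ := hp i hi
        obtain ⟨hn0, hn1⟩ := hno i hi
        exact ⟨h0.lt_of_ne (Ne.symm hn0), h1.lt_of_ne hn1⟩
      obtain ⟨a, haS, hcase⟩ := hbad
      have haE : a ∉ s.erase a := Finset.notMem_erase a s
      have hins : insert a (s.erase a) = s := Finset.insert_erase haS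
      have hpE : ∀ i ∈ s.erase a, 0 ≤ p i ∧ p i ≤ 1 :=
        fun i hi => hp i (Finset.mem_erase.mp hi).2
      have hcard : (s.erase a).card + 1 = s.card := by
        rw [Finset.card_erase_of_mem haS]
        have : 1 ≤ s.card := Finset.card_pos.mpr ⟨a, haS⟩
        omega
      have hIH := IH (s.erase a) (Finset.erase_ssubset haS) hpE
      have hWnot : ∀ T, a ∉ T → W p s T = (1 - p a) * W p (s.erase a) T := by
        intro T hT
        calc W p s T = W p (insert a (s.erase a)) T := by rw [hins]
          _ = (1 - p a) * W p (s.erase a) T := W_insert_not_mem haE hT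
      have hWmem : ∀ T, a ∈ T → W p s T = p a * W p (s.erase a) (T.erase a) := by
        intro T hT
        calc W p s T = W p (insert a (s.erase a)) T := by rw [hins]
          _ = p a * W p (s.erase a) (T.erase a) := W_insert_mem haE hT
      have hLvsucc : ∀ k, Lv p s (k + 1)
          = (1 - p a) * Lv p (s.erase a) (k + 1) + p a * Lv p (s.erase a) k := by
        intro k
        calc Lv p s (k+1) = Lv p (insert a (s.erase a)) (k+1) := by rw [hins]
          _ = _ := Lv_insert_succ haE k
      have hLvzero : Lv p s 0 = (1 - p a) * Lv p (s.erase a) 0 := by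
        calc Lv p s 0 = Lv p (insert a (s.erase a)) 0 := by rw [hins]
          _ = _ := Lv_insert_zero haE
      rcases hcase with h0 | h1
      · -- p a = 0 : sets containing a have weight zero
        set A' : Finset (Finset ι) := A.filter (fun T => a ∉ T) with hA'def
        have hA'sub : ∀ T ∈ A', T ⊆ s.erase a := by
          intro T hT
          rw [hA'def, Finset.mem_filter] at hT
          intro i hi
          exact Finset.mem_erase.mpr ⟨by rintro rfl; exact hT.2 hi, hA T hT.1 hi⟩
        have hanti' : ∀ T ∈ A', ∀ T' ∈ A', T ⊆ T' → T = T' := by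
          intro T hT T' hT' hsub
          rw [hA'def, Finset.mem_filter] at hT hT'
          exact anti T hT.1 T' hT'.1 hsub
        have hsum : ∑ T ∈ A, W p s T = ∑ T ∈ A', W p (s.erase a) T := by
          rw [← Finset.sum_filter_add_sum_filter_not A (fun T => a ∉ T)]
          have hz : ∑ T ∈ A.filter (fun T => ¬ a ∉ T), W p s T = 0 := by
            apply Finset.sum_eq_zero
            intro T hT
            rw [Finset.mem_filter, not_not] at hT
            rw [hWmem T hT.2, h0, zero_mul]
          rw [hz, add_zero]
          apply Finset.sum_congr rfl
          intro T hT
          rw [Finset.mem_filter] at hT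
          rw [hWnot T hT.2, h0]
          ring
        have hLv : ∀ k, Lv p (s.erase a) k = Lv p s k := by
          intro k
          rcases k with _ | j
          · rw [hLvzero, h0]; ring
          · rw [hLvsucc j, h0]; ring
        rw [hsum]
        calc ∑ T ∈ A', W p (s.erase a) T
            ≤ (Finset.range ((s.erase a).card + 1)).sup' (by simp)
                (fun k => Lv p (s.erase a) k) := hIH A' hA'sub hanti'
          _ ≤ (Finset.range (s.card + 1)).sup' (by simp) (fun k => Lv p s k) := by
              apply Finset.sup'_le
              intro k hk
              rw [Finset.mem_range] at hk
              rw [hLv k]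
              exact Finset.le_sup' _ (Finset.mem_range.mpr (by omega))
      · -- p a = 1 : sets not containing a have weight zero
        set A' : Finset (Finset ι) := (A.filter (fun T => a ∈ T)).image (fun T => T.erase a)
          with hA'def
        have hA'sub : ∀ T ∈ A', T ⊆ s.erase a := by
          intro T hT
          rw [hA'def, Finset.mem_image] at hT
          obtain ⟨T', hT', rfl⟩ := hT
          rw [Finset.mem_filter] at hT'
          intro i hi
          rw [Finset.mem_erase] at hi
          exact Finset.mem_erase.mpr ⟨hi.1, hA T' hT'.1 hi.2⟩
        have hanti' : ∀ T ∈ A', ∀ T' ∈ A', T ⊆ T' → T = T' := by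
          intro T hT T' hT' hsub
          rw [hA'def, Finset.mem_image] at hT hT'
          obtain ⟨R, hR, rfl⟩ := hT
          obtain ⟨R', hR', rfl⟩ := hT'
          rw [Finset.mem_filter] at hR hR'
          have hRR' : R ⊆ R' := by
            intro i hi
            by_cases hia : i = a
            · exact hia ▸ hR'.2
            · exact (Finset.mem_erase.mp (hsub (Finset.mem_erase.mpr ⟨hia, hi⟩))).2
          rw [anti R hR.1 R' hR'.1 hRR']
        have hinj : ∀ T ∈ A.filter (fun T => a ∈ T), ∀ T' ∈ A.filter (fun T => a ∈ T),
            T.erase a = T'.erase a → T = T' := by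
          intro T hT T' hT' hE
          rw [Finset.mem_filter] at hT hT'
          rw [← Finset.insert_erase hT.2, hE, Finset.insert_erase hT'.2]
        have hsum : ∑ T ∈ A, W p s T = ∑ T ∈ A', W p (s.erase a) T := by
          rw [← Finset.sum_filter_add_sum_filter_not A (fun T => a ∈ T)]
          have hz : ∑ T ∈ A.filter (fun T => ¬ a ∈ T), W p s T = 0 := by
            apply Finset.sum_eq_zero
            intro T hT
            rw [Finset.mem_filter] at hT
            rw [hWnot T hT.2, h1]
            ring
          rw [hz, add_zero, hA'def, Finset.sum_image hinj]
          apply Finset.sum_congr rfl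
          intro T hT
          rw [Finset.mem_filter] at hT
          rw [hWmem T hT.2, h1, one_mul]
        have hLv : ∀ k, Lv p (s.erase a) k = Lv p s (k + 1) := by
          intro k
          rw [hLvsucc k, h1]
          ring
        rw [hsum]
        calc ∑ T ∈ A', W p (s.erase a) T
            ≤ (Finset.range ((s.erase a).card + 1)).sup' (by simp)
                (fun k => Lv p (s.erase a) k) := hIH A' hA'sub hanti'
          _ ≤ (Finset.range (s.card + 1)).sup' (by simp) (fun k => Lv p s k) := by
              apply Finset.sup'_le
              intro k hk
              rw [Finset.mem_range] at hk
              rw [hLv k]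
              exact Finset.le_sup' _ (Finset.mem_range.mpr (by omega))

end LORed

open LORed in
/-- **reduction of the Littlewood–Offord problem to `±1` coefficients.**
For mutually independent Bernoulli random variables `B_1, …, B_n` (taking only the
values `0` and `1`) and nonzero reals `v_1, …, v_n`,
`sup_x P(v_1B_1 + ⋯ + v_nB_n = x) ≤ max_{a ∈ {−1,1}^n} sup_x P(a_1B_1 + ⋯ + a_nB_n = x)`. -/
theorem littlewood_offord_reduction
    {Ω : Type*} [MeasureSpace Ω] [IsProbabilityMeasure (ℙ : Measure Ω)]
    (n : ℕ) (B : Fin n → Ω → ℝ) (hBm : ∀ i, Measurable (B i))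
    (hB01 : ∀ i ω, B i ω = 0 ∨ B i ω = 1)
    (hindep : iIndepFun B ℙ)
    (v : Fin n → ℝ) (hv : ∀ i, v i ≠ 0) :
    (⨆ x : ℝ, (ℙ {ω | ∑ i, v i * B i ω = x}).toReal) ≤
      ⨆ a : {a : Fin n → ℝ // ∀ i, a i = 1 ∨ a i = -1},
        ⨆ x : ℝ, (ℙ {ω | ∑ i, (a : Fin n → ℝ) i * B i ω = x}).toReal := by
  classical
  -- basic objects
  set p : Fin n → ℝ := fun i => (ℙ {ω | B i ω = 1}).toReal with hpdef
  set N : Finset (Fin n) := Finset.univ.filter (fun i => v i < 0) with hNdef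
  set a : Fin n → ℝ := fun i => if v i < 0 then -1 else 1 with hadef
  have ha : ∀ i, a i = 1 ∨ a i = -1 := by
    intro i; rw [hadef]; by_cases h : v i < 0 <;> simp [h]
  set p' : Fin n → ℝ := fun i => if v i < 0 then 1 - p i else p i with hp'def
  -- events
  set Ev : Finset (Fin n) → Set Ω :=
    fun T => {ω | ∀ i, B i ω = if i ∈ T then 1 else 0} with hEvdef
  have hEvInter : ∀ T, Ev T = ⋂ i ∈ (Finset.univ : Finset (Fin n)),
      B i ⁻¹' {if i ∈ T then (1:ℝ) else 0} := by
    intro T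
    ext ω
    simp [hEvdef, Set.mem_iInter]
  have hEvMeas : ∀ T, MeasurableSet (Ev T) := by
    intro T
    rw [hEvInter]
    exact MeasurableSet.biInter (Set.to_countable _)
      (fun i _ => hBm i (measurableSet_singleton _))
  -- probabilities are bounded by one etc
  have hp01 : ∀ i ∈ (Finset.univ : Finset (Fin n)), 0 ≤ p i ∧ p i ≤ 1 := by
    intro i _
    constructor
    · exact ENNReal.toReal_nonneg
    · rw [hpdef]
      exact ENNReal.toReal_le_of_le_ofReal zero_le_one (by simpa using prob_le_one)
  -- event probability = product weight
  have hEvProb : ∀ T, (ℙ (Ev T)).toReal = W p Finset.univ T := by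
    intro T
    have := hindep.measure_inter_preimage_eq_mul (Finset.univ)
      (sets := fun i => {if i ∈ T then (1:ℝ) else 0})
      (fun i _ => measurableSet_singleton _)
    rw [hEvInter, this, ENNReal.toReal_prod]
    rw [W]
    rw [← Finset.prod_sdiff (Finset.subset_univ T)]
    rw [mul_comm]
    congr 1
    · apply Finset.prod_congr rfl
      intro i hi
      beta_reduce
      rw [if_pos hi]
      rfl
    · apply Finset.prod_congr rfl
      intro i hi
      beta_reduce
      rw [Finset.mem_sdiff] at hi
      have h0 : B i ⁻¹' {if i ∈ T then (1:ℝ) else 0} = {ω | B i ω = 1}ᶜ := by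
        rw [if_neg hi.2]
        ext ω
        simp only [Set.mem_preimage, Set.mem_singleton_iff, Set.mem_compl_iff,
          Set.mem_setOf_eq]
        constructor
        · intro h h1; rw [h1] at h; norm_num at h
        · intro h; rcases hB01 i ω with h' | h' <;> simp [h'] at h ⊢
      rw [h0, prob_compl_eq_one_sub (show MeasurableSet {ω | B i ω = 1} from hBm i (measurableSet_singleton 1))]
      rw [ENNReal.toReal_sub_of_le (by simpa using prob_le_one) ENNReal.one_ne_top]
      simp [hpdef]
  -- decomposition of sum-events
  have hdecomp : ∀ (f : Fin n → ℝ) (x : ℝ),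
      {ω | ∑ i, f i * B i ω = x}
        = ⋃ T ∈ Finset.univ.filter (fun T : Finset (Fin n) => ∑ i ∈ T, f i = x), Ev T := by
    intro f x
    ext ω
    simp only [Set.mem_setOf_eq, Set.mem_iUnion, Finset.mem_filter, Finset.mem_univ,
      true_and]
    have hsum : ∑ i, f i * B i ω = ∑ i ∈ Finset.univ.filter (fun i => B i ω = 1), f i := by
      rw [Finset.sum_filter]
      apply Finset.sum_congr rfl
      intro i _
      rcases hB01 i ω with h | h <;> simp [h]
    constructor
    · intro h
      refine ⟨Finset.univ.filter (fun i => B i ω = 1), ?_, ?_⟩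
      · rw [← hsum, h]
      · intro i
        by_cases hB : B i ω = 1 <;> simp [hB, Finset.mem_filter]
        rcases hB01 i ω with h' | h'
        · exact h'
        · exact absurd h' hB
    · rintro ⟨T, hTsum, hTev⟩
      have : Finset.univ.filter (fun i => B i ω = 1) = T := by
        ext i
        simp only [Finset.mem_filter, Finset.mem_univ, true_and]
        constructor
        · intro h
          by_contra hiT
          have := hTev i
          rw [if_neg hiT] at this
          rw [this] at h; norm_num at h
        · intro h
          have := hTev i
          rw [if_pos h] at this
          exact this
      rw [hsum, this, hTsum]
  have hdisj : ∀ (S : Finset (Finset (Fin n))),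
      (S : Set (Finset (Fin n))).PairwiseDisjoint Ev := by
    intro S T _ T' _ hTT'
    simp only [Function.onFun]
    rw [Set.disjoint_left]
    intro ω hω hω'
    apply hTT'
    ext i
    have h1 := hω i
    have h2 := hω' i
    by_cases hiT : i ∈ T <;> by_cases hiT' : i ∈ T' <;>
      simp [hiT, hiT'] at h1 h2 ⊢ <;> rw [h1] at h2 <;> norm_num at h2
  have hprob : ∀ (f : Fin n → ℝ) (x : ℝ),
      (ℙ {ω | ∑ i, f i * B i ω = x}).toReal
        = ∑ T ∈ Finset.univ.filter (fun T : Finset (Fin n) => ∑ i ∈ T, f i = x),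
            W p Finset.univ T := by
    intro f x
    rw [hdecomp f x, measure_biUnion_finset (hdisj _) (fun T _ => hEvMeas T),
      ENNReal.toReal_sum (fun T _ => measure_ne_top _ _)]
    exact Finset.sum_congr rfl fun T _ => hEvProb T

  have hNmem : ∀ i, i ∈ N ↔ v i < 0 := by intro i; simp [hNdef]
  have htoReal_le_one : ∀ S : Set Ω, (ℙ S).toReal ≤ 1 := fun S =>
    ENNReal.toReal_le_of_le_ofReal zero_le_one (by simpa using prob_le_one)
  -- single-product representation of W over univ
  have hWuniv : ∀ (q : Fin n → ℝ) (T : Finset (Fin n)),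
      W q Finset.univ T = ∏ i, (if i ∈ T then q i else 1 - q i) := by
    intro q T
    rw [W]
    calc (∏ i ∈ T, q i) * ∏ i ∈ Finset.univ \ T, (1 - q i)
        = (∏ i ∈ Finset.univ \ T, (1 - q i)) * ∏ i ∈ T, q i := mul_comm _ _
      _ = (∏ i ∈ Finset.univ \ T, (if i ∈ T then q i else 1 - q i))
            * ∏ i ∈ T, (if i ∈ T then q i else 1 - q i) := by
          congr 1
          · exact Finset.prod_congr rfl fun i hi =>
              (if_neg (Finset.mem_sdiff.mp hi).2).symm
          · exact Finset.prod_congr rfl fun i hi => (if_pos hi).symm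
      _ = ∏ i, (if i ∈ T then q i else 1 - q i) :=
          Finset.prod_sdiff (Finset.subset_univ T)
  -- weight invariance under the twist T ↦ T ∆ N
  have hW_symm : ∀ T : Finset (Fin n), W p Finset.univ T = W p' Finset.univ (T ∆ N) := by
    intro T
    rw [hWuniv, hWuniv]
    apply Finset.prod_congr rfl
    intro i _
    have hvi := hNmem i
    by_cases hiN : i ∈ N
    · have hv' : v i < 0 := hvi.mp hiN
      have hp'i : p' i = 1 - p i := by rw [hp'def]; exact if_pos hv'
      by_cases hiT : i ∈ T
      · have hmem : i ∉ T ∆ N := by simp [Finset.mem_symmDiff, hiT, hiN]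
        rw [if_pos hiT, if_neg hmem, hp'i]; ring
      · have hmem : i ∈ T ∆ N := by simp [Finset.mem_symmDiff, hiT, hiN]
        rw [if_neg hiT, if_pos hmem, hp'i]
    · have hv' : ¬ v i < 0 := fun h => hiN (hvi.mpr h)
      have hp'i : p' i = p i := by rw [hp'def]; exact if_neg hv'
      by_cases hiT : i ∈ T
      · have hmem : i ∈ T ∆ N := by simp [Finset.mem_symmDiff, hiT, hiN]
        rw [if_pos hiT, if_pos hmem, hp'i]
      · have hmem : i ∉ T ∆ N := by simp [Finset.mem_symmDiff, hiT, hiN]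
        rw [if_neg hiT, if_neg hmem, hp'i]
  -- sum identity for a over the twist
  have hsymm_card : ∀ T : Finset (Fin n),
      ∑ i ∈ T, a i = ((T ∆ N).card : ℝ) - (N.card : ℝ) := by
    intro T
    have hsplit : ∑ i ∈ T, a i
        = ∑ i ∈ T.filter (fun i => v i < 0), a i
          + ∑ i ∈ T.filter (fun i => ¬ v i < 0), a i :=
      (Finset.sum_filter_add_sum_filter_not T _ _).symm
    have h1 : ∑ i ∈ T.filter (fun i => v i < 0), a i
        = -((T ∩ N).card : ℝ) := by
      have he : T.filter (fun i => v i < 0) = T ∩ N := by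
        ext i; simp [hNmem i, Finset.mem_filter]
      have hval : ∀ i ∈ T ∩ N, a i = -1 := by
        intro i hi
        rw [hadef]
        exact if_pos ((hNmem i).mp (Finset.mem_inter.mp hi).2)
      rw [he, Finset.sum_congr rfl hval, Finset.sum_const]
      simp
    have h2 : ∑ i ∈ T.filter (fun i => ¬ v i < 0), a i
        = ((T \ N).card : ℝ) := by
      have he : T.filter (fun i => ¬ v i < 0) = T \ N := by
        ext i; simp [hNmem i, Finset.mem_filter]
      have hval : ∀ i ∈ T \ N, a i = 1 := by
        intro i hi
        rw [hadef]
        exact if_neg (fun h => (Finset.mem_sdiff.mp hi).2 ((hNmem i).mpr h))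
      rw [he, Finset.sum_congr rfl hval, Finset.sum_const]
      simp
    have hcard1 : (T ∆ N).card = (T \ N).card + (N \ T).card := by
      rw [symmDiff_def, Finset.sup_eq_union]
      exact Finset.card_union_of_disjoint (disjoint_sdiff_sdiff)
    have hcard2 : (N ∩ T).card + (N \ T).card = N.card :=
      Finset.card_inter_add_card_sdiff N T
    have hcard3 : (T ∩ N).card = (N ∩ T).card := by rw [Finset.inter_comm]
    rw [hsplit, h1, h2]
    push_cast [hcard1, ← hcard2, hcard3]
    ring
  -- sum identity for v over the twist
  have hsymm_v : ∀ T : Finset (Fin n),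
      ∑ i ∈ T, v i = (∑ i ∈ T ∆ N, |v i|) - ∑ i ∈ N, |v i| := by
    intro T
    have hsplit : ∑ i ∈ T, v i
        = ∑ i ∈ T ∩ N, v i + ∑ i ∈ T \ N, v i := by
      rw [← Finset.sum_filter_add_sum_filter_not T (fun i => v i < 0)]
      congr 1
      · apply Finset.sum_congr ?_ (fun _ _ => rfl)
        ext i; simp [hNmem, Finset.mem_inter, Finset.mem_filter]
      · apply Finset.sum_congr ?_ (fun _ _ => rfl)
        ext i; simp [hNmem, Finset.mem_sdiff, Finset.mem_filter]
    have h1 : ∑ i ∈ T ∩ N, v i = -∑ i ∈ T ∩ N, |v i| := by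
      rw [← Finset.sum_neg_distrib]
      apply Finset.sum_congr rfl
      intro i hi
      have : v i < 0 := (hNmem i).mp (Finset.mem_inter.mp hi).2
      rw [abs_of_neg this]; ring
    have h2 : ∑ i ∈ T \ N, v i = ∑ i ∈ T \ N, |v i| := by
      apply Finset.sum_congr rfl
      intro i hi
      have : ¬ v i < 0 := fun h => (Finset.mem_sdiff.mp hi).2 ((hNmem i).mpr h)
      rw [abs_of_nonneg (not_lt.mp this)]
    have h3 : ∑ i ∈ T ∆ N, |v i| = ∑ i ∈ T \ N, |v i| + ∑ i ∈ N \ T, |v i| := by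
      rw [symmDiff_def, Finset.sup_eq_union]
      exact Finset.sum_union (disjoint_sdiff_sdiff)
    have h4 : ∑ i ∈ N, |v i| = ∑ i ∈ N ∩ T, |v i| + ∑ i ∈ N \ T, |v i| := by
      rw [Finset.sum_inter_add_sum_sdiff]
    have h5 : ∑ i ∈ T ∩ N, |v i| = ∑ i ∈ N ∩ T, |v i| := by rw [Finset.inter_comm]
    rw [hsplit, h1, h2, h3, h4, h5]
    ring
  have hinvol : ∀ T : Finset (Fin n), (T ∆ N) ∆ N = T := by
    intro T
    simp [symmDiff_symmDiff_cancel_right]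
  -- p' is in [0,1]
  have hp'01 : ∀ i ∈ (Finset.univ : Finset (Fin n)), 0 ≤ p' i ∧ p' i ≤ 1 := by
    intro i hi
    obtain ⟨h0, h1⟩ := hp01 i hi
    rw [hp'def]
    by_cases h : v i < 0 <;> simp [h] <;> constructor <;> linarith
  have hcardu : (Finset.univ : Finset (Fin n)).card = n := by simp
  -- level sums are the point probabilities of the ±1 combination
  have hLv_fiber : ∀ k : ℕ, Lv p' Finset.univ k
      = (ℙ {ω | ∑ i, a i * B i ω = (k : ℝ) - (N.card : ℝ)}).toReal := by
    intro k
    rw [hprob a ((k:ℝ) - (N.card : ℝ)), Lv_def, Finset.powerset_univ]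
    apply Finset.sum_nbij' (i := fun S => S ∆ N) (j := fun S => S ∆ N)
    · intro S hS
      rw [Finset.mem_filter] at hS ⊢
      refine ⟨Finset.mem_univ _, ?_⟩
      rw [hsymm_card (S ∆ N), hinvol S, hS.2]
    · intro S hS
      rw [Finset.mem_filter] at hS ⊢
      refine ⟨Finset.mem_univ _, ?_⟩
      have := hsymm_card S
      rw [hS.2] at this
      have h2 : ((S ∆ N).card : ℝ) = (k : ℝ) := by linarith
      exact_mod_cast h2
    · exact fun S _ => hinvol S
    · exact fun S _ => hinvol S
    · intro S _
      have h := hW_symm (S ∆ N)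
      rw [hinvol S] at h
      exact h.symm
  -- main bound, fiber by fiber
  apply ciSup_le
  intro x
  set y : ℝ := x + ∑ i ∈ N, |v i| with hydef
  set Ay : Finset (Finset (Fin n)) :=
    Finset.univ.filter (fun S => ∑ i ∈ S, |v i| = y) with hAydef
  have hfib_sum : (ℙ {ω | ∑ i, v i * B i ω = x}).toReal = ∑ S ∈ Ay, W p' Finset.univ S := by
    rw [hprob v x]
    apply Finset.sum_nbij' (i := fun T => T ∆ N) (j := fun S => S ∆ N)
    · intro T hT
      rw [Finset.mem_filter] at hT ⊢
      refine ⟨Finset.mem_univ _, ?_⟩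
      have := hsymm_v T
      rw [hT.2] at this
      rw [hydef]; linarith
    · intro S hS
      rw [Finset.mem_filter] at hS ⊢
      refine ⟨Finset.mem_univ _, ?_⟩
      have := hsymm_v (S ∆ N)
      rw [hinvol S, hS.2] at this
      rw [this, hydef]; ring
    · exact fun T _ => hinvol T
    · exact fun S _ => hinvol S
    · exact fun T _ => hW_symm T
  have hanti : ∀ T ∈ Ay, ∀ T' ∈ Ay, T ⊆ T' → T = T' := by
    intro T hT T' hT' hsub
    by_contra hne
    obtain ⟨i, hiT', hiT⟩ := Finset.exists_of_ssubset ⟨hsub, fun h => hne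
      (Finset.Subset.antisymm hsub h)⟩
    have hlt : ∑ j ∈ T, |v j| < ∑ j ∈ T', |v j| :=
      Finset.sum_lt_sum_of_subset hsub hiT' hiT (abs_pos.mpr (hv i))
        (fun j _ _ => abs_nonneg (v j))
    rw [Finset.mem_filter] at hT hT'
    rw [hT.2, hT'.2] at hlt
    exact lt_irrefl y hlt
  have hle := antichain_le_sup' p' Finset.univ hp'01 Ay
    (fun T _ => Finset.subset_univ T) hanti
  have hbdd : ∀ (g : Fin n → ℝ),
      BddAbove (Set.range fun x : ℝ => (ℙ {ω | ∑ i, g i * B i ω = x}).toReal) := by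
    intro g
    refine ⟨1, ?_⟩
    rintro r ⟨x, rfl⟩
    exact htoReal_le_one _
  obtain ⟨k0, hk0mem, hk0⟩ := Finset.exists_mem_eq_sup'
    (show (Finset.range ((Finset.univ : Finset (Fin n)).card + 1)).Nonempty by simp)
    (fun k => Lv p' Finset.univ k)
  calc (ℙ {ω | ∑ i, v i * B i ω = x}).toReal
      = ∑ S ∈ Ay, W p' Finset.univ S := hfib_sum
    _ ≤ (Finset.range ((Finset.univ : Finset (Fin n)).card + 1)).sup' (by simp)
          (fun k => Lv p' Finset.univ k) := hle
    _ = Lv p' Finset.univ k0 := hk0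
    _ = (ℙ {ω | ∑ i, a i * B i ω = (k0 : ℝ) - (N.card : ℝ)}).toReal := hLv_fiber k0
    _ ≤ ⨆ x : ℝ, (ℙ {ω | ∑ i, a i * B i ω = x}).toReal :=
        le_ciSup (hbdd a) ((k0 : ℝ) - (N.card : ℝ))
    _ ≤ ⨆ a' : {a' : Fin n → ℝ // ∀ i, a' i = 1 ∨ a' i = -1},
          ⨆ x : ℝ, (ℙ {ω | ∑ i, (a' : Fin n → ℝ) i * B i ω = x}).toReal := by
        apply le_ciSup (f := fun a' : {a' : Fin n → ℝ // ∀ i, a' i = 1 ∨ a' i = -1} =>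
          ⨆ x : ℝ, (ℙ {ω | ∑ i, (a' : Fin n → ℝ) i * B i ω = x}).toReal) ?_ ⟨a, ha⟩
        refine ⟨1, ?_⟩
        rintro r ⟨a', rfl⟩
        exact ciSup_le fun x => htoReal_le_one _
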